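/- Let (V_1,...,V_n) be an n-tuple of doubly non-commuting isometries on a complex Hilbert space H, and suppose T is a bounded operator on H that commutes with the projections V_i^k V_i^{*k} for all i = 1,...,n and all k ≥ 1 (equivalently, every subspace V_i^k(H) reduces T). Then for every (possibly empty) A = {i_1,...,i_l} ⊆ {1,...,n}, each summand V_{i_1}^{k_{i_1}} ⋯ V_{i_l}^{k_{i_l}}(W_A) of the orthogonal decomposition of H_A reduces T; in particular the A-wandering subspace W_A reduces T, and consequently H_A reduces T. -/

import Mathlib

set_option linter.unusedSectionVars false


open ContinuousLinearMap

variable {H : Type*} [NormedAddCommGroup H] [InnerProductSpace ℂ H] [CompleteSpace H]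

/-- The purely isometric part `H^iso`: the closed linear span of the subspaces
`S^k (ker S*)`, `k ≥ 0`. -/
noncomputable def Hiso (S : H →L[ℂ] H) : Submodule ℂ H :=
  (⨆ k : ℕ, Submodule.map ((S ^ k : H →L[ℂ] H) : H →ₗ[ℂ] H) (LinearMap.ker (adjoint S : H →ₗ[ℂ] H))).topologicalClosure

/-- The unitary part `H^uni := ⋂_{k≥0} S^k (H)`. -/
noncomputable def Huni (S : H →L[ℂ] H) : Submodule ℂ H :=
  ⨅ k : ℕ, LinearMap.range ((S ^ k : H →L[ℂ] H) : H →ₗ[ℂ] H)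

/-- A closed subspace `L` reduces `S` if it is invariant under `S` and `S*`. -/
def Reduces (S : H →L[ℂ] H) (L : Submodule ℂ H) : Prop :=
  (∀ x ∈ L, S x ∈ L) ∧ ∀ x ∈ L, adjoint S x ∈ L

/-- `S` is unitary on `L`: `S` maps `L` onto `L`. -/
def UnitaryOn (S : H →L[ℂ] H) (L : Submodule ℂ H) : Prop :=
  Submodule.map (S : H →ₗ[ℂ] H) L = L

/-- `S` is a pure isometry on the `S`-invariant subspace `L`: `{0}` is the only
`S`-invariant closed subspace of `L` on which `S` is unitary. -/
def PureOn (S : H →L[ℂ] H) (L : Submodule ℂ H) : Prop :=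
  ∀ M : Submodule ℂ H, IsClosed (M : Set H) → M ≤ L → Submodule.map (S : H →ₗ[ℂ] H) M = M → M = ⊥

/-- `P` is the orthogonal projection of `H` onto the subspace `K`. -/
def IsOrthoProj (P : H →L[ℂ] H) (K : Submodule ℂ H) : Prop :=
  ∀ x, P x ∈ K ∧ x - P x ∈ Kᗮ

/-- `(V 1, ..., V n)` is an `n`-tuple of doubly non-commuting isometries with structure
constants `z i j`: each `V i` is an isometry (`(V i)* (V i) = 1`) and
`(V i)* (V j) = conj (z i j) • (V j) (V i)*` for all `i ≠ j`. -/
def DoublyNonCommuting {n : ℕ} (z : Fin n → Fin n → ℂ) (V : Fin n → H →L[ℂ] H) : Prop :=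
  (∀ i, adjoint (V i) * V i = 1) ∧
    ∀ i j, i ≠ j →
      adjoint (V i) * V j = (starRingEnd ℂ) (z i j) • (V j * adjoint (V i))

/-- The space `H_A = ⋂_{i ∈ A} H_i^iso ∩ ⋂_{i ∈ Aᶜ} H_i^uni` (the range of the
projection `P_A`). -/
noncomputable def HA {n : ℕ} (V : Fin n → H →L[ℂ] H) (A : Finset (Fin n)) : Submodule ℂ H :=
  (⨅ i ∈ A, Hiso (V i)) ⊓ ⨅ i ∈ Aᶜ, Huni (V i)

/-- The ordered product `V_{s 1} ^ (m (s 1)) ⋯ V_{s r} ^ (m (s r))` over a list `s` of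
indices. -/
noncomputable def listProdPow {n : ℕ} (V : Fin n → H →L[ℂ] H) (s : List (Fin n))
    (m : Fin n → ℕ) : H →L[ℂ] H :=
  (s.map fun j => V j ^ m j).prod

/-- The `A`-wandering subspace
`W_A = ⋂_{m} V_{j_1}^{m_{j_1}} ⋯ V_{j_{n-l}}^{m_{j_{n-l}}} (⋂_{i ∈ A} ker (V i)*)`,
where `j_1 < ⋯ < j_{n-l}` enumerates `Aᶜ`. -/
noncomputable def WA {n : ℕ} (V : Fin n → H →L[ℂ] H) (A : Finset (Fin n)) : Submodule ℂ H :=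
  ⨅ m : Fin n → ℕ,
    Submodule.map (listProdPow V (Aᶜ.sort (· ≤ ·)) m : H →ₗ[ℂ] H)
      (⨅ i ∈ A, LinearMap.ker (adjoint (V i) : H →ₗ[ℂ] H))

/-- The summand `V_{i_1}^{k_{i_1}} ⋯ V_{i_l}^{k_{i_l}} (W_A)` of `H_A`, where
`i_1 < ⋯ < i_l` enumerates `A`. -/
noncomputable def SummandA {n : ℕ} (V : Fin n → H →L[ℂ] H) (A : Finset (Fin n))
    (k : Fin n → ℕ) : Submodule ℂ H :=
  Submodule.map (listProdPow V (A.sort (· ≤ ·)) k : H →ₗ[ℂ] H) (WA V A)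


section Aux

variable {H : Type*} [NormedAddCommGroup H] [InnerProductSpace ℂ H] [CompleteSpace H]

private lemma adjoint_mul' (A B : H →L[ℂ] H) : adjoint (A * B) = adjoint B * adjoint A := by
  rw [← star_eq_adjoint, ← star_eq_adjoint, ← star_eq_adjoint, star_mul]

private lemma adjoint_pow' (A : H →L[ℂ] H) (p : ℕ) : adjoint (A ^ p) = adjoint A ^ p := by
  rw [← star_eq_adjoint, ← star_eq_adjoint, star_pow]

private lemma adjoint_one' : adjoint (1 : H →L[ℂ] H) = 1 := by
  rw [← star_eq_adjoint, star_one]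

/-- If `a * b = c • (b * a)` then `a * b ^ q = c ^ q • (b ^ q * a)`. -/
private lemma mul_pow_smul {a b : H →L[ℂ] H} {c : ℂ} (h : a * b = c • (b * a)) (q : ℕ) :
    a * b ^ q = c ^ q • (b ^ q * a) := by
  induction q with
  | zero => simp
  | succ q ih =>
    calc a * b ^ (q + 1) = (a * b ^ q) * b := by rw [pow_succ, mul_assoc]
    _ = c ^ q • (b ^ q * (a * b)) := by rw [ih, smul_mul_assoc, mul_assoc]
    _ = c ^ q • (b ^ q * (c • (b * a))) := by rw [h]
    _ = c ^ (q + 1) • (b ^ (q + 1) * a) := by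
        rw [mul_smul_comm, smul_smul, ← mul_assoc, ← pow_succ, ← pow_succ]

private lemma pow_comm_smul {a b : H →L[ℂ] H} {c : ℂ} (h : a * b = c • (b * a)) (p q : ℕ) :
    a ^ p * b ^ q = c ^ (p * q) • (b ^ q * a ^ p) := by
  induction p with
  | zero => simp
  | succ p ih =>
    calc a ^ (p + 1) * b ^ q = a * (a ^ p * b ^ q) := by rw [pow_succ', mul_assoc]
    _ = c ^ (p * q) • ((a * b ^ q) * a ^ p) := by rw [ih, mul_smul_comm, mul_assoc]
    _ = c ^ (p * q) • ((c ^ q • (b ^ q * a)) * a ^ p) := by rw [mul_pow_smul h]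
    _ = (c ^ (p * q) * c ^ q) • (b ^ q * (a * a ^ p)) := by
        rw [smul_mul_assoc, smul_smul, mul_assoc]
    _ = c ^ ((p + 1) * q) • (b ^ q * a ^ (p + 1)) := by
        rw [← pow_add, ← pow_succ', Nat.succ_mul]

private lemma commute_star_left {a b : H →L[ℂ] H} (hb : star b = b) (h : Commute a b) :
    Commute (star a) b := by
  have h2 : star b * star a = star a * star b := by
    rw [← star_mul, ← star_mul, h.eq]
  rw [hb] at h2
  exact h2.symm

private lemma eq_zero_of_adjoint_mul_self {X : H →L[ℂ] H} (h : adjoint X * X = 0) : X = 0 := by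
  ext x
  have h1 : (inner ℂ (X x) (X x) : ℂ) = 0 := by
    rw [← adjoint_inner_right, ← ContinuousLinearMap.mul_apply, h]
    simp
  simpa using inner_self_eq_zero.mp h1

end Aux

section Aux2

variable {H : Type*} [NormedAddCommGroup H] [InnerProductSpace ℂ H] [CompleteSpace H]
variable {n : ℕ} {z : Fin n → Fin n → ℂ} {V : Fin n → H →L[ℂ] H}

private lemma derive_h3
    (h1 : ∀ i, adjoint (V i) * V i = 1)
    (h2 : ∀ i j, i ≠ j → adjoint (V i) * V j = star (z i j) • (V j * adjoint (V i)))
    (hz2 : ∀ i j, i ≠ j → z j i = star (z i j))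
    (hzu : ∀ i j, i ≠ j → z i j * star (z i j) = 1) :
    ∀ i j, i ≠ j → V i * V j = z i j • (V j * V i) := by
  intro i j hij
  set X : H →L[ℂ] H := V i * V j - z i j • (V j * V i) with hX
  have hadj : adjoint X = (adjoint (V j) * adjoint (V i))
      - star (z i j) • (adjoint (V i) * adjoint (V j)) := by
    rw [← star_eq_adjoint, hX, star_sub, star_smul, star_mul, star_mul,
      star_eq_adjoint, star_eq_adjoint]
  have t1 : (adjoint (V j) * adjoint (V i)) * (V i * V j) = 1 := by
    rw [mul_assoc, ← mul_assoc (adjoint (V i)), h1 i, one_mul, h1 j]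
  have t2 : (adjoint (V j) * adjoint (V i)) * (V j * V i) = star (z i j) • 1 := by
    rw [mul_assoc, ← mul_assoc (adjoint (V i)), h2 i j hij, smul_mul_assoc, mul_smul_comm,
      mul_assoc, h1 i, mul_one, h1 j]
  have t3 : (adjoint (V i) * adjoint (V j)) * (V i * V j) = z i j • 1 := by
    have hji : adjoint (V j) * V i = z i j • (V i * adjoint (V j)) := by
      rw [h2 j i hij.symm, ← hz2 j i hij.symm]
    rw [mul_assoc, ← mul_assoc (adjoint (V j)), hji, smul_mul_assoc, mul_smul_comm,
      mul_assoc, h1 j, mul_one, h1 i]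
  have t4 : (adjoint (V i) * adjoint (V j)) * (V j * V i) = 1 := by
    rw [mul_assoc, ← mul_assoc (adjoint (V j)), h1 j, one_mul, h1 i]
  have e1 : (adjoint (V j) * adjoint (V i)) * X = 0 := by
    rw [hX, mul_sub, mul_smul_comm, t1, t2, smul_smul, hzu i j hij, one_smul, sub_self]
  have e2 : (adjoint (V i) * adjoint (V j)) * X = 0 := by
    rw [hX, mul_sub, mul_smul_comm, t3, t4, sub_self]
  have hXX : adjoint X * X = 0 := by
    rw [hadj, sub_mul, smul_mul_assoc, e1, e2, smul_zero, sub_self]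
  have hX0 : X = 0 := eq_zero_of_adjoint_mul_self hXX
  rw [hX] at hX0
  exact sub_eq_zero.mp hX0

private lemma derive_h4
    (h3 : ∀ i j, i ≠ j → V i * V j = z i j • (V j * V i))
    (hzu : ∀ i j, i ≠ j → z i j * star (z i j) = 1) :
    ∀ i j, i ≠ j → adjoint (V i) * adjoint (V j) = z i j • (adjoint (V j) * adjoint (V i)) := by
  intro i j hij
  have h := congrArg star (h3 i j hij)
  rw [star_mul, star_smul, star_mul] at h
  have h' := congrArg (fun Y : H →L[ℂ] H => z i j • Y) h
  simp only [smul_smul, hzu i j hij, one_smul] at h'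
  rw [← star_eq_adjoint, ← star_eq_adjoint]
  exact h'.symm

/-- `(V i)*^a (V i)^a = 1`. -/
private lemma powIso (h1 : ∀ i, adjoint (V i) * V i = 1) (i : Fin n) (a : ℕ) :
    adjoint (V i) ^ a * V i ^ a = 1 := by
  induction a with
  | zero => simp
  | succ a ih =>
    rw [pow_succ, pow_succ' (V i), mul_assoc, ← mul_assoc (adjoint (V i)), h1 i, one_mul, ih]

/-- `(V i)*^(a+1) (V i)^a = (V i)*`. -/
private lemma powIso' (h1 : ∀ i, adjoint (V i) * V i = 1) (i : Fin n) (a : ℕ) :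
    adjoint (V i) ^ (a + 1) * V i ^ a = adjoint (V i) := by
  rw [pow_succ', mul_assoc, powIso h1 i a, mul_one]

/-- `V i ^ p` commutes with the range projection `Q j q` for `i ≠ j`. -/
private lemma commVQ
    (h2 : ∀ i j, i ≠ j → adjoint (V i) * V j = star (z i j) • (V j * adjoint (V i)))
    (h3 : ∀ i j, i ≠ j → V i * V j = z i j • (V j * V i))
    (hzu : ∀ i j, i ≠ j → z i j * star (z i j) = 1)
    {i j : Fin n} (hij : i ≠ j) (p q : ℕ) :
    Commute (V i ^ p) (V j ^ q * adjoint (V j) ^ q) := by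
  have e1 : adjoint (V j) ^ q * V i ^ p
      = (star (z j i)) ^ (q * p) • (V i ^ p * adjoint (V j) ^ q) :=
    pow_comm_smul (h2 j i hij.symm) q p
  have e2 : V j ^ q * V i ^ p = (z j i) ^ (q * p) • (V i ^ p * V j ^ q) :=
    pow_comm_smul (h3 j i hij.symm) q p
  have key : (V j ^ q * adjoint (V j) ^ q) * V i ^ p = V i ^ p * (V j ^ q * adjoint (V j) ^ q) := by
    calc (V j ^ q * adjoint (V j) ^ q) * V i ^ p
        = V j ^ q * (adjoint (V j) ^ q * V i ^ p) := by rw [mul_assoc]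
      _ = (star (z j i)) ^ (q * p) • ((V j ^ q * V i ^ p) * adjoint (V j) ^ q) := by
          rw [e1, mul_smul_comm, mul_assoc]
      _ = ((star (z j i)) ^ (q * p) * (z j i) ^ (q * p)) •
            (V i ^ p * (V j ^ q * adjoint (V j) ^ q)) := by
          rw [e2, smul_mul_assoc, smul_smul, mul_assoc]
      _ = V i ^ p * (V j ^ q * adjoint (V j) ^ q) := by
          rw [← mul_pow, mul_comm (star (z j i)), hzu j i hij.symm, one_pow, one_smul]
  exact key.symm

private lemma starQ (i : Fin n) (q : ℕ) :
    star (V i ^ q * adjoint (V i) ^ q) = V i ^ q * adjoint (V i) ^ q := by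
  have h : star (adjoint (V i)) = V i := by rw [← star_eq_adjoint, star_star]
  rw [star_mul, star_pow, star_pow, h, star_eq_adjoint]

/-- `(V i)* ^ p` commutes with the range projection `Q j q` for `i ≠ j`. -/
private lemma commVsQ
    (h2 : ∀ i j, i ≠ j → adjoint (V i) * V j = star (z i j) • (V j * adjoint (V i)))
    (h3 : ∀ i j, i ≠ j → V i * V j = z i j • (V j * V i))
    (hzu : ∀ i j, i ≠ j → z i j * star (z i j) = 1)
    {i j : Fin n} (hij : i ≠ j) (p q : ℕ) :
    Commute (adjoint (V i) ^ p) (V j ^ q * adjoint (V j) ^ q) := by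
  have h := commute_star_left (starQ j q) (commVQ h2 h3 hzu hij p q)
  rwa [star_pow, star_eq_adjoint] at h

private lemma commQQ
    (h2 : ∀ i j, i ≠ j → adjoint (V i) * V j = star (z i j) • (V j * adjoint (V i)))
    (h3 : ∀ i j, i ≠ j → V i * V j = z i j • (V j * V i))
    (hzu : ∀ i j, i ≠ j → z i j * star (z i j) = 1)
    {i j : Fin n} (hij : i ≠ j) (p q : ℕ) :
    Commute (V i ^ p * adjoint (V i) ^ p) (V j ^ q * adjoint (V j) ^ q) :=
  (commVQ h2 h3 hzu hij p q).mul_left (commVsQ h2 h3 hzu hij p q)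

/- -------------------- listProdPow lemmas -------------------- -/

private lemma listProdPow_nil (m : Fin n → ℕ) : listProdPow V [] m = 1 := by
  simp [listProdPow]

private lemma listProdPow_cons (j : Fin n) (s : List (Fin n)) (m : Fin n → ℕ) :
    listProdPow V (j :: s) m = V j ^ m j * listProdPow V s m := by
  simp [listProdPow]

private lemma listProdPow_append (s t : List (Fin n)) (m : Fin n → ℕ) :
    listProdPow V (s ++ t) m = listProdPow V s m * listProdPow V t m := by
  simp [listProdPow]

private lemma listProdPow_congr {s : List (Fin n)} {m₁ m₂ : Fin n → ℕ}
    (h : ∀ j ∈ s, m₁ j = m₂ j) : listProdPow V s m₁ = listProdPow V s m₂ := by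
  unfold listProdPow
  congr 1
  exact List.map_congr_left (fun j hj => by rw [h j hj])

private lemma isomL (h1 : ∀ i, adjoint (V i) * V i = 1) (s : List (Fin n)) (m : Fin n → ℕ) :
    adjoint (listProdPow V s m) * listProdPow V s m = 1 := by
  induction s with
  | nil => rw [listProdPow_nil, adjoint_one', one_mul]
  | cons j s ih =>
    rw [listProdPow_cons, adjoint_mul', adjoint_pow', mul_assoc,
      ← mul_assoc (adjoint (V j) ^ m j), powIso h1 j (m j), one_mul, ih]

private lemma injL (h1 : ∀ i, adjoint (V i) * V i = 1) (s : List (Fin n)) (m : Fin n → ℕ) :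
    Function.Injective (listProdPow V s m) := by
  intro a b hab
  have h := congrArg (adjoint (listProdPow V s m)) hab
  rwa [← ContinuousLinearMap.mul_apply, ← ContinuousLinearMap.mul_apply, isomL h1 s m, ContinuousLinearMap.one_apply, ContinuousLinearMap.one_apply] at h

private lemma S1 (h1 : ∀ i, adjoint (V i) * V i = 1) (s : List (Fin n)) (m : Fin n → ℕ) (x : H) :
    adjoint (listProdPow V s m) (listProdPow V s m x) = x := by
  rw [← ContinuousLinearMap.mul_apply, isomL h1 s m, ContinuousLinearMap.one_apply]

/-- The range projection of `listProdPow` is the product of the individual range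
projections. -/
private lemma prodForm
    (h2 : ∀ i j, i ≠ j → adjoint (V i) * V j = star (z i j) • (V j * adjoint (V i)))
    (h3 : ∀ i j, i ≠ j → V i * V j = z i j • (V j * V i))
    (hzu : ∀ i j, i ≠ j → z i j * star (z i j) = 1)
    (s : List (Fin n)) (hs : s.Nodup) (m : Fin n → ℕ) :
    listProdPow V s m * adjoint (listProdPow V s m)
      = (s.map (fun i => V i ^ m i * adjoint (V i) ^ m i)).prod := by
  induction s with
  | nil => rw [listProdPow_nil, adjoint_one', one_mul, List.map_nil, List.prod_nil]
  | cons j s ih =>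
    rw [List.nodup_cons] at hs
    obtain ⟨hjs, hs'⟩ := hs
    have hcomm : Commute (V j ^ m j) ((s.map (fun i => V i ^ m i * adjoint (V i) ^ m i)).prod) :=
      Commute.list_prod_right _ _ (by
        intro x hx
        rw [List.mem_map] at hx
        obtain ⟨i, his, rfl⟩ := hx
        have hji : j ≠ i := by rintro rfl; exact hjs his
        exact commVQ h2 h3 hzu hji (m j) (m i))
    have hcomm2 : Commute (V j ^ m j * adjoint (V j) ^ m j)
        ((s.map (fun i => V i ^ m i * adjoint (V i) ^ m i)).prod) :=
      Commute.list_prod_right _ _ (by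
        intro x hx
        rw [List.mem_map] at hx
        obtain ⟨i, his, rfl⟩ := hx
        have hji : j ≠ i := by rintro rfl; exact hjs his
        exact commQQ h2 h3 hzu hji (m j) (m i))
    calc listProdPow V (j :: s) m * adjoint (listProdPow V (j :: s) m)
        = V j ^ m j * ((listProdPow V s m * adjoint (listProdPow V s m))
            * adjoint (V j) ^ m j) := by
          rw [listProdPow_cons, adjoint_mul', adjoint_pow', mul_assoc, mul_assoc]
      _ = V j ^ m j * ((s.map (fun i => V i ^ m i * adjoint (V i) ^ m i)).prod
            * adjoint (V j) ^ m j) := by rw [ih hs']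
      _ = (V j ^ m j * (s.map (fun i => V i ^ m i * adjoint (V i) ^ m i)).prod)
            * adjoint (V j) ^ m j := by rw [mul_assoc]
      _ = ((s.map (fun i => V i ^ m i * adjoint (V i) ^ m i)).prod * V j ^ m j)
            * adjoint (V j) ^ m j := by rw [hcomm.eq]
      _ = (s.map (fun i => V i ^ m i * adjoint (V i) ^ m i)).prod
            * (V j ^ m j * adjoint (V j) ^ m j) := by rw [mul_assoc]
      _ = ((j :: s).map (fun i => V i ^ m i * adjoint (V i) ^ m i)).prod := by
          rw [List.map_cons, List.prod_cons, hcomm2.eq]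

private lemma commE {T' : H →L[ℂ] H}
    (h2 : ∀ i j, i ≠ j → adjoint (V i) * V j = star (z i j) • (V j * adjoint (V i)))
    (h3 : ∀ i j, i ≠ j → V i * V j = z i j • (V j * V i))
    (hzu : ∀ i j, i ≠ j → z i j * star (z i j) = 1)
    (hC : ∀ i p, Commute T' (V i ^ p * adjoint (V i) ^ p))
    (s : List (Fin n)) (hs : s.Nodup) (m : Fin n → ℕ) :
    Commute T' (listProdPow V s m * adjoint (listProdPow V s m)) := by
  rw [prodForm h2 h3 hzu s hs m]
  exact Commute.list_prod_right _ _ (by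
    intro x hx
    rw [List.mem_map] at hx
    obtain ⟨i, _, rfl⟩ := hx
    exact hC i (m i))

/- -------------------- kernel lemmas -------------------- -/

private lemma S2
    (h2 : ∀ i j, i ≠ j → adjoint (V i) * V j = star (z i j) • (V j * adjoint (V i)))
    {i : Fin n} {s : List (Fin n)} (his : i ∉ s) (m : Fin n → ℕ) {x : H}
    (hx : adjoint (V i) x = 0) : adjoint (V i) (listProdPow V s m x) = 0 := by
  induction s with
  | nil => rw [listProdPow_nil, ContinuousLinearMap.one_apply]; exact hx
  | cons j s ih =>
    have hij : i ≠ j := fun h => his (h ▸ (List.mem_cons_self : j ∈ j :: s))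
    have his' : i ∉ s := fun h => his (List.mem_cons_of_mem j h)
    have e : adjoint (V i) * V j ^ m j
        = (star (z i j)) ^ m j • (V j ^ m j * adjoint (V i)) := mul_pow_smul (h2 i j hij) (m j)
    rw [listProdPow_cons, ContinuousLinearMap.mul_apply, ← ContinuousLinearMap.mul_apply (adjoint (V i)), e, ContinuousLinearMap.smul_apply, ContinuousLinearMap.mul_apply,
      ih his', map_zero, smul_zero]

private lemma S3
    (h4 : ∀ i j, i ≠ j → adjoint (V i) * adjoint (V j) = z i j • (adjoint (V j) * adjoint (V i)))
    {i : Fin n} {s : List (Fin n)} (his : i ∉ s) (m : Fin n → ℕ) {y : H}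
    (hy : adjoint (V i) y = 0) : adjoint (V i) (adjoint (listProdPow V s m) y) = 0 := by
  induction s generalizing y with
  | nil => rw [listProdPow_nil, adjoint_one', ContinuousLinearMap.one_apply]; exact hy
  | cons j s ih =>
    have hij : i ≠ j := fun h => his (h ▸ (List.mem_cons_self : j ∈ j :: s))
    have his' : i ∉ s := fun h => his (List.mem_cons_of_mem j h)
    have e : adjoint (V i) * adjoint (V j) ^ m j
        = (z i j) ^ m j • (adjoint (V j) ^ m j * adjoint (V i)) :=
      mul_pow_smul (h4 i j hij) (m j)
    have hy' : adjoint (V i) ((adjoint (V j) ^ m j) y) = 0 := by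
      rw [← ContinuousLinearMap.mul_apply, e, ContinuousLinearMap.smul_apply, ContinuousLinearMap.mul_apply, hy, map_zero, smul_zero]
    rw [listProdPow_cons, adjoint_mul', adjoint_pow', ContinuousLinearMap.mul_apply]
    exact ih his' hy'

private lemma S4 (h1 : ∀ i, adjoint (V i) * V i = 1)
    (h2 : ∀ i j, i ≠ j → adjoint (V i) * V j = star (z i j) • (V j * adjoint (V i)))
    {i : Fin n} {s : List (Fin n)} (hs : s.Nodup) (his : i ∈ s) (m : Fin n → ℕ) {x : H}
    (hx : adjoint (V i) x = 0) :
    ((adjoint (V i)) ^ (m i + 1)) (listProdPow V s m x) = 0 := by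
  induction s with
  | nil => exact absurd his List.not_mem_nil
  | cons j s ih =>
    rw [List.nodup_cons] at hs
    obtain ⟨hjs, hs'⟩ := hs
    rw [listProdPow_cons, ContinuousLinearMap.mul_apply]
    rcases List.mem_cons.mp his with heq | hmem
    · subst heq
      rw [← ContinuousLinearMap.mul_apply ((adjoint (V i)) ^ (m i + 1)), powIso' h1 i (m i)]
      exact S2 h2 hjs m hx
    · have hij : i ≠ j := fun h => hjs (h ▸ hmem)
      have e : (adjoint (V i)) ^ (m i + 1) * V j ^ m j
          = (star (z i j)) ^ ((m i + 1) * m j) • (V j ^ m j * (adjoint (V i)) ^ (m i + 1)) :=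
        pow_comm_smul (h2 i j hij) (m i + 1) (m j)
      rw [← ContinuousLinearMap.mul_apply ((adjoint (V i)) ^ (m i + 1)), e, ContinuousLinearMap.smul_apply, ContinuousLinearMap.mul_apply,
        ih hs' hmem, map_zero, smul_zero]

private lemma S5
    (h4 : ∀ i j, i ≠ j → adjoint (V i) * adjoint (V j) = z i j • (adjoint (V j) * adjoint (V i)))
    {i : Fin n} {s : List (Fin n)} (hs : s.Nodup) (his : i ∈ s) (m : Fin n → ℕ) {y : H}
    (hy : ((adjoint (V i)) ^ (m i + 1)) y = 0) :
    adjoint (V i) (adjoint (listProdPow V s m) y) = 0 := by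
  induction s generalizing y with
  | nil => exact absurd his List.not_mem_nil
  | cons j s ih =>
    rw [List.nodup_cons] at hs
    obtain ⟨hjs, hs'⟩ := hs
    rw [listProdPow_cons, adjoint_mul', adjoint_pow', ContinuousLinearMap.mul_apply]
    rcases List.mem_cons.mp his with heq | hmem
    · subst heq
      have hw : adjoint (V i) (((adjoint (V i)) ^ m i) y) = 0 := by
        rw [← ContinuousLinearMap.mul_apply, ← pow_succ']
        exact hy
      exact S3 h4 hjs m hw
    · have hij : i ≠ j := fun h => hjs (h ▸ hmem)
      have e : (adjoint (V i)) ^ (m i + 1) * (adjoint (V j)) ^ m j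
          = (z i j) ^ ((m i + 1) * m j) •
              ((adjoint (V j)) ^ m j * (adjoint (V i)) ^ (m i + 1)) :=
        pow_comm_smul (h4 i j hij) (m i + 1) (m j)
      have hy' : ((adjoint (V i)) ^ (m i + 1)) (((adjoint (V j)) ^ m j) y) = 0 := by
        rw [← ContinuousLinearMap.mul_apply, e, ContinuousLinearMap.smul_apply, ContinuousLinearMap.mul_apply, hy, map_zero, smul_zero]
      exact ih hs' hmem hy'

end Aux2

section Aux3

variable {H : Type*} [NormedAddCommGroup H] [InnerProductSpace ℂ H] [CompleteSpace H]
variable {n : ℕ} {z : Fin n → Fin n → ℂ} {V : Fin n → H →L[ℂ] H}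

private lemma mem_KA_iff {A : Finset (Fin n)} {x : H} :
    x ∈ (⨅ i ∈ A, LinearMap.ker (adjoint (V i) : H →ₗ[ℂ] H)) ↔ ∀ i ∈ A, adjoint (V i) x = 0 := by
  simp only [Submodule.mem_iInf, LinearMap.mem_ker, ContinuousLinearMap.coe_coe]

/-- Characterization of `map L K_A` when no index of `A` occurs in `s`. -/
private lemma charW (h1 : ∀ i, adjoint (V i) * V i = 1)
    (h2 : ∀ i j, i ≠ j → adjoint (V i) * V j = star (z i j) • (V j * adjoint (V i)))
    (h4 : ∀ i j, i ≠ j → adjoint (V i) * adjoint (V j) = z i j • (adjoint (V j) * adjoint (V i)))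
    (A : Finset (Fin n)) {s : List (Fin n)} (hAs : ∀ i ∈ A, i ∉ s) (m : Fin n → ℕ) (y : H) :
    y ∈ Submodule.map (listProdPow V s m : H →ₗ[ℂ] H) (⨅ i ∈ A, LinearMap.ker (adjoint (V i) : H →ₗ[ℂ] H)) ↔
      ((listProdPow V s m * adjoint (listProdPow V s m)) y = y ∧
        ∀ i ∈ A, adjoint (V i) y = 0) := by
  constructor
  · intro hmem
    obtain ⟨x, hx, rfl⟩ := Submodule.mem_map.mp hmem
    simp only [ContinuousLinearMap.coe_coe]
    have hx' := mem_KA_iff.mp hx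
    constructor
    · rw [ContinuousLinearMap.mul_apply, S1 h1 s m x]
    · intro i hiA
      exact S2 h2 (hAs i hiA) m (hx' i hiA)
  · rintro ⟨hE, hker⟩
    refine Submodule.mem_map.mpr ⟨adjoint (listProdPow V s m) y, ?_,
      by rw [ContinuousLinearMap.coe_coe, ← ContinuousLinearMap.mul_apply]; exact hE⟩
    refine mem_KA_iff.mpr fun i hiA => S3 h4 (hAs i hiA) m (hker i hiA)

/-- Characterization of `map L K_A` when every index of `A` occurs in `s`. -/
private lemma charS (h1 : ∀ i, adjoint (V i) * V i = 1)
    (h2 : ∀ i j, i ≠ j → adjoint (V i) * V j = star (z i j) • (V j * adjoint (V i)))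
    (h4 : ∀ i j, i ≠ j → adjoint (V i) * adjoint (V j) = z i j • (adjoint (V j) * adjoint (V i)))
    (A : Finset (Fin n)) {s : List (Fin n)} (hs : s.Nodup) (hAs : ∀ i ∈ A, i ∈ s)
    (m : Fin n → ℕ) (y : H) :
    y ∈ Submodule.map (listProdPow V s m : H →ₗ[ℂ] H) (⨅ i ∈ A, LinearMap.ker (adjoint (V i) : H →ₗ[ℂ] H)) ↔
      ((listProdPow V s m * adjoint (listProdPow V s m)) y = y ∧
        ∀ i ∈ A, ((adjoint (V i)) ^ (m i + 1)) y = 0) := by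
  constructor
  · intro hmem
    obtain ⟨x, hx, rfl⟩ := Submodule.mem_map.mp hmem
    simp only [ContinuousLinearMap.coe_coe]
    have hx' := mem_KA_iff.mp hx
    constructor
    · rw [ContinuousLinearMap.mul_apply, S1 h1 s m x]
    · intro i hiA
      exact S4 h1 h2 hs (hAs i hiA) m (hx' i hiA)
  · rintro ⟨hE, hker⟩
    refine Submodule.mem_map.mpr ⟨adjoint (listProdPow V s m) y, ?_,
      by rw [ContinuousLinearMap.coe_coe, ← ContinuousLinearMap.mul_apply]; exact hE⟩
    refine mem_KA_iff.mpr fun i hiA => S5 h4 hs (hAs i hiA) m (hker i hiA)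

/- -------------------- preservation helpers -------------------- -/

private lemma Pfix {T' E : H →L[ℂ] H} (hC : Commute T' E) {y : H} (hy : E y = y) :
    E (T' y) = T' y := by
  rw [← ContinuousLinearMap.mul_apply, ← hC.eq, ContinuousLinearMap.mul_apply, hy]

private lemma Pker (h1 : ∀ i, adjoint (V i) * V i = 1) {T' : H →L[ℂ] H} {i : Fin n} {p : ℕ}
    (hC : Commute T' (V i ^ p * adjoint (V i) ^ p)) {y : H}
    (hy : ((adjoint (V i)) ^ p) y = 0) : ((adjoint (V i)) ^ p) (T' y) = 0 := by
  have hQy : (V i ^ p * adjoint (V i) ^ p) y = 0 := by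
    rw [ContinuousLinearMap.mul_apply, hy, map_zero]
  have hQTy : (V i ^ p * adjoint (V i) ^ p) (T' y) = 0 := by
    rw [← ContinuousLinearMap.mul_apply, ← hC.eq, ContinuousLinearMap.mul_apply, hQy, map_zero]
  have opid : (adjoint (V i)) ^ p * (V i ^ p * adjoint (V i) ^ p) = (adjoint (V i)) ^ p := by
    rw [← mul_assoc, powIso h1 i p, one_mul]
  calc ((adjoint (V i)) ^ p) (T' y)
      = ((adjoint (V i)) ^ p * (V i ^ p * adjoint (V i) ^ p)) (T' y) := by rw [opid]
    _ = ((adjoint (V i)) ^ p) ((V i ^ p * adjoint (V i) ^ p) (T' y)) := by rw [ContinuousLinearMap.mul_apply]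
    _ = 0 := by rw [hQTy, map_zero]

/- -------------------- Submodule.map lemmas -------------------- -/

private lemma map_mul_eq (A B : H →L[ℂ] H) (K : Submodule ℂ H) :
    Submodule.map ((A * B : H →L[ℂ] H) : H →ₗ[ℂ] H) K
      = Submodule.map (A : H →ₗ[ℂ] H) (Submodule.map (B : H →ₗ[ℂ] H) K) := by
  ext x
  constructor
  · intro hx
    obtain ⟨y, hy, rfl⟩ := Submodule.mem_map.mp hx
    exact Submodule.mem_map.mpr ⟨B y, Submodule.mem_map.mpr ⟨y, hy, rfl⟩, (ContinuousLinearMap.mul_apply A B y)⟩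
  · intro hx
    obtain ⟨w, hw, rfl⟩ := Submodule.mem_map.mp hx
    obtain ⟨y, hy, rfl⟩ := Submodule.mem_map.mp hw
    exact Submodule.mem_map.mpr ⟨y, hy, (ContinuousLinearMap.mul_apply A B y).symm⟩

private lemma map_iInf_of_inj {ι : Sort*} [Nonempty ι] {A : H →L[ℂ] H}
    (hA : Function.Injective A) (P : ι → Submodule ℂ H) :
    Submodule.map (A : H →ₗ[ℂ] H) (⨅ t, P t) = ⨅ t, Submodule.map (A : H →ₗ[ℂ] H) (P t) := by
  apply le_antisymm
  · intro x hx
    obtain ⟨y, hy, rfl⟩ := Submodule.mem_map.mp hx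
    exact (Submodule.mem_iInf _).mpr fun t =>
      Submodule.mem_map.mpr ⟨y, (Submodule.mem_iInf P).mp hy t, rfl⟩
  · intro x hx
    have hx' := (Submodule.mem_iInf _).mp hx
    obtain ⟨t₀⟩ := ‹Nonempty ι›
    obtain ⟨y, _, hxy⟩ := Submodule.mem_map.mp (hx' t₀)
    refine Submodule.mem_map.mpr ⟨y, (Submodule.mem_iInf P).mpr fun t => ?_, hxy⟩
    obtain ⟨y', hy', hxy'⟩ := Submodule.mem_map.mp (hx' t)
    have hyy : y' = y := hA (hxy'.trans hxy.symm)
    exact hyy ▸ hy'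

/- -------------------- Hiso/Huni helpers -------------------- -/

private lemma charIso (h1 : ∀ i, adjoint (V i) * V i = 1) (i : Fin n) (p : ℕ) (y : H) :
    y ∈ Submodule.map (((V i) ^ p : H →L[ℂ] H) : H →ₗ[ℂ] H) (LinearMap.ker (adjoint (V i) : H →ₗ[ℂ] H)) ↔
      ((V i ^ p * adjoint (V i) ^ p) y = y ∧ ((adjoint (V i)) ^ (p + 1)) y = 0) := by
  constructor
  · intro hmem
    obtain ⟨x, hx, rfl⟩ := Submodule.mem_map.mp hmem
    rw [LinearMap.mem_ker] at hx
    simp only [ContinuousLinearMap.coe_coe] at hx ⊢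
    constructor
    · rw [← ContinuousLinearMap.mul_apply, mul_assoc, powIso h1 i p, mul_one]
    · rw [← ContinuousLinearMap.mul_apply, powIso' h1 i p]
      exact hx
  · rintro ⟨hQ, hker⟩
    refine Submodule.mem_map.mpr ⟨((adjoint (V i)) ^ p) y, ?_, by rw [ContinuousLinearMap.coe_coe, ← ContinuousLinearMap.mul_apply]; exact hQ⟩
    rw [LinearMap.mem_ker, ContinuousLinearMap.coe_coe, ← ContinuousLinearMap.mul_apply, ← pow_succ']
    exact hker

private lemma charUni (h1 : ∀ i, adjoint (V i) * V i = 1) (i : Fin n) (p : ℕ) (y : H) :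
    y ∈ LinearMap.range (((V i) ^ p : H →L[ℂ] H) : H →ₗ[ℂ] H) ↔ (V i ^ p * adjoint (V i) ^ p) y = y := by
  constructor
  · intro hmem
    obtain ⟨w, rfl⟩ := LinearMap.mem_range.mp hmem
    rw [ContinuousLinearMap.coe_coe, ← ContinuousLinearMap.mul_apply, mul_assoc, powIso h1 i p, mul_one]
  · intro hQ
    refine LinearMap.mem_range.mpr ⟨((adjoint (V i)) ^ p) y, ?_⟩
    rw [ContinuousLinearMap.coe_coe, ← ContinuousLinearMap.mul_apply]
    exact hQ

end Aux3

theorem statement15 {n : ℕ} (hn : 1 ≤ n) (z : Fin n → Fin n → ℂ)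
    (hz1 : ∀ i j, i ≠ j → ‖z i j‖ = 1)
    (hz2 : ∀ i j, i ≠ j → z j i = (starRingEnd ℂ) (z i j))
    (V : Fin n → H →L[ℂ] H) (hV : DoublyNonCommuting z V)
    (T : H →L[ℂ] H)
    (hT : ∀ i, ∀ k : ℕ, 1 ≤ k → Commute T (V i ^ k * adjoint (V i) ^ k)) :
    ∀ A : Finset (Fin n),
      (∀ k : Fin n → ℕ, Reduces T (SummandA V A k)) ∧
      Reduces T (WA V A) ∧ Reduces T (HA V A) := by
  obtain ⟨h1, h2⟩ := hV
  simp only [starRingEnd_apply] at h2 hz2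
  have hzu : ∀ i j, i ≠ j → z i j * star (z i j) = 1 := by
    intro i j hij
    have hnorm := hz1 i j hij
    have hsq : Complex.normSq (z i j) = 1 := by
      rw [Complex.normSq_eq_norm_sq, hnorm, one_pow]
    rw [← starRingEnd_apply, Complex.mul_conj, hsq, Complex.ofReal_one]
  have h3 := derive_h3 h1 h2 hz2 hzu
  have h4 := derive_h4 h3 hzu
  have hCQ : ∀ (T' : H →L[ℂ] H),
      (∀ i, ∀ k : ℕ, 1 ≤ k → Commute T' (V i ^ k * adjoint (V i) ^ k)) →
      ∀ i p, Commute T' (V i ^ p * adjoint (V i) ^ p) := by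
    intro T' h i p
    cases p with
    | zero => simpa using Commute.one_right T'
    | succ p => exact h i (p + 1) (Nat.succ_le_succ (Nat.zero_le p))
  have hTQ : ∀ i p, Commute T (V i ^ p * adjoint (V i) ^ p) := hCQ T hT
  have hTsQ : ∀ i p, Commute (adjoint T) (V i ^ p * adjoint (V i) ^ p) := by
    intro i p
    have h := commute_star_left (starQ i p) (hTQ i p)
    rwa [star_eq_adjoint] at h
  intro A
  -- W_A reduces
  have redW : ∀ (T' : H →L[ℂ] H), (∀ i p, Commute T' (V i ^ p * adjoint (V i) ^ p)) →
      ∀ x ∈ WA V A, T' x ∈ WA V A := by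
    intro T' hC x hx
    unfold WA at hx ⊢
    rw [Submodule.mem_iInf] at hx ⊢
    intro m
    have hAs : ∀ i ∈ A, i ∉ Aᶜ.sort (· ≤ ·) := by
      intro i hiA hmem
      rw [Finset.mem_sort] at hmem
      exact (Finset.mem_compl.mp hmem) hiA
    have hchar := charW h1 h2 h4 A hAs m
    obtain ⟨hE, hker⟩ := (hchar x).mp (hx m)
    refine (hchar (T' x)).mpr
      ⟨Pfix (commE h2 h3 hzu hC _ (Finset.sort_nodup _ _) m) hE, ?_⟩
    intro i hiA
    have hp : ((adjoint (V i)) ^ 1) x = 0 := by rw [pow_one]; exact hker i hiA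
    have := Pker h1 (hC i 1) hp
    rwa [pow_one] at this
  -- the summands reduce
  have hop : ∀ k m : Fin n → ℕ,
      listProdPow V (A.sort (· ≤ ·)) k * listProdPow V (Aᶜ.sort (· ≤ ·)) m
        = listProdPow V (A.sort (· ≤ ·) ++ Aᶜ.sort (· ≤ ·))
            (fun i => if i ∈ A then k i else m i) := by
    intro k m
    rw [listProdPow_append]
    have e1 : listProdPow V (A.sort (· ≤ ·)) k
        = listProdPow V (A.sort (· ≤ ·)) (fun i => if i ∈ A then k i else m i) :=
      listProdPow_congr (fun j hj => by
        rw [Finset.mem_sort] at hj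
        exact (if_pos hj).symm)
    have e2 : listProdPow V (Aᶜ.sort (· ≤ ·)) m
        = listProdPow V (Aᶜ.sort (· ≤ ·)) (fun i => if i ∈ A then k i else m i) :=
      listProdPow_congr (fun j hj => by
        rw [Finset.mem_sort] at hj
        exact (if_neg (Finset.mem_compl.mp hj)).symm)
    rw [← e1, ← e2]
  have hSummand : ∀ k : Fin n → ℕ, SummandA V A k = ⨅ m : Fin n → ℕ,
      Submodule.map (listProdPow V (A.sort (· ≤ ·) ++ Aᶜ.sort (· ≤ ·))
          (fun i => if i ∈ A then k i else m i) : H →ₗ[ℂ] H)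
        (⨅ i ∈ A, LinearMap.ker (adjoint (V i) : H →ₗ[ℂ] H)) := by
    intro k
    have step1 : SummandA V A k = ⨅ m : Fin n → ℕ,
        Submodule.map (listProdPow V (A.sort (· ≤ ·)) k : H →ₗ[ℂ] H)
          (Submodule.map (listProdPow V (Aᶜ.sort (· ≤ ·)) m : H →ₗ[ℂ] H)
            (⨅ i ∈ A, LinearMap.ker (adjoint (V i) : H →ₗ[ℂ] H))) := by
      unfold SummandA WA
      exact map_iInf_of_inj (injL h1 _ _) _
    rw [step1]
    exact iInf_congr (fun m => by rw [← map_mul_eq, hop k m])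
  have redS : ∀ (T' : H →L[ℂ] H), (∀ i p, Commute T' (V i ^ p * adjoint (V i) ^ p)) →
      ∀ k : Fin n → ℕ, ∀ x ∈ SummandA V A k, T' x ∈ SummandA V A k := by
    intro T' hC k x hx
    rw [hSummand k] at hx ⊢
    rw [Submodule.mem_iInf] at hx ⊢
    intro m
    have hsnodup : (A.sort (· ≤ ·) ++ Aᶜ.sort (· ≤ ·)).Nodup :=
      List.Nodup.append (Finset.sort_nodup _ _) (Finset.sort_nodup _ _)
        (by
          intro a ha hb
          rw [Finset.mem_sort] at ha hb
          exact (Finset.mem_compl.mp hb) ha)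
    have hAs : ∀ i ∈ A, i ∈ A.sort (· ≤ ·) ++ Aᶜ.sort (· ≤ ·) :=
      fun i hi => List.mem_append.mpr (Or.inl ((Finset.mem_sort _).mpr hi))
    have hchar := charS h1 h2 h4 A hsnodup hAs (fun i => if i ∈ A then k i else m i)
    obtain ⟨hE, hker⟩ := (hchar x).mp (hx m)
    refine (hchar (T' x)).mpr
      ⟨Pfix (commE h2 h3 hzu hC _ hsnodup _) hE, ?_⟩
    intro i hiA
    exact Pker h1 (hC i _) (hker i hiA)
  -- H_A reduces
  have redH : ∀ (T' : H →L[ℂ] H), (∀ i p, Commute T' (V i ^ p * adjoint (V i) ^ p)) →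
      ∀ x ∈ HA V A, T' x ∈ HA V A := by
    intro T' hC x hx
    unfold HA at hx ⊢
    rw [Submodule.mem_inf] at hx ⊢
    obtain ⟨hiso, huni⟩ := hx
    constructor
    · simp only [Submodule.mem_iInf] at hiso ⊢
      intro i hiA
      have hx' := hiso i hiA
      unfold Hiso at hx' ⊢
      set M : Submodule ℂ H := ⨆ k : ℕ, Submodule.map (((V i) ^ k : H →L[ℂ] H) : H →ₗ[ℂ] H) (LinearMap.ker (adjoint (V i) : H →ₗ[ℂ] H)) with hM
      have hx'' : x ∈ closure (M : Set H) := hx'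
      have hmaps : Set.MapsTo T' (M : Set H) (M : Set H) := by
        intro y hy
        rw [SetLike.mem_coe] at hy ⊢
        rw [hM] at hy ⊢
        refine Submodule.iSup_induction
          (motive := fun w => T' w ∈
            ⨆ k : ℕ, Submodule.map (((V i) ^ k : H →L[ℂ] H) : H →ₗ[ℂ] H) (LinearMap.ker (adjoint (V i) : H →ₗ[ℂ] H)))
          _ hy (fun p w hw => ?_) (by simp) (fun a b ha hb => ?_)
        · have hw' := (charIso h1 i p w).mp hw
          have hmem : T' w ∈ Submodule.map (((V i) ^ p : H →L[ℂ] H) : H →ₗ[ℂ] H) (LinearMap.ker (adjoint (V i) : H →ₗ[ℂ] H)) :=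
            (charIso h1 i p (T' w)).mpr ⟨Pfix (hC i p) hw'.1, Pker h1 (hC i (p + 1)) hw'.2⟩
          exact (le_iSup (fun k : ℕ =>
            Submodule.map (((V i) ^ k : H →L[ℂ] H) : H →ₗ[ℂ] H) (LinearMap.ker (adjoint (V i) : H →ₗ[ℂ] H))) p) hmem
        · show T' (a + b) ∈ ⨆ k : ℕ, Submodule.map (((V i) ^ k : H →L[ℂ] H) : H →ₗ[ℂ] H) (LinearMap.ker (adjoint (V i) : H →ₗ[ℂ] H))
          rw [map_add]
          exact add_mem ha hb
      exact map_mem_closure T'.continuous hx'' hmaps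
    · simp only [Submodule.mem_iInf] at huni ⊢
      intro i hiAc
      have hx' := huni i hiAc
      unfold Huni at hx' ⊢
      rw [Submodule.mem_iInf] at hx' ⊢
      intro p
      have hQ : (V i ^ p * adjoint (V i) ^ p) x = x := (charUni h1 i p x).mp (hx' p)
      exact (charUni h1 i p (T' x)).mpr (Pfix (hC i p) hQ)
  exact ⟨fun k => ⟨redS T hTQ k, redS (adjoint T) hTsQ k⟩,
    ⟨redW T hTQ, redW (adjoint T) hTsQ⟩,
    ⟨redH T hTQ, redH (adjoint T) hTsQ⟩⟩
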